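/- arXiv:1906.01591 — 3 statements merged into one kernel-verified Lean document; each statement's English description precedes it below -/
import Mathlib

section
/- Monogamy of perfect pair state transfer: let G be a finite simple graph with Laplacian L and transition matrix U(t) = exp(itL), and let a ≠ b be vertices of G. Suppose there is perfect pair state transfer from (a,b) to (c,d) at some time t₁ > 0 and from (a,b) to (c′,d′) at some time t₂ > 0, where c ≠ d, c′ ≠ d′, {c,d} ≠ {a,b}, and {c′,d′} ≠ {a,b}. Then {c,d} = {c′,d′} as unordered pairs. -/
open Matrix

variable {V : Type*}

/-- The transition matrix `U(t) = exp(itL)` of the continuous quantum walk on `G`,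
where `L` is the Laplacian of `G`. -/
noncomputable def transitionMatrix [Fintype V] [DecidableEq V] (G : SimpleGraph V)
    [DecidableRel G.Adj] (t : ℝ) : Matrix V V ℂ :=
  NormedSpace.exp ((Complex.I * (t : ℂ)) • G.lapMatrix ℂ)

/-- The pair state `e_a - e_b`. -/
def pairState [DecidableEq V] (a b : V) : V → ℂ := Pi.single a 1 - Pi.single b 1

/-- Perfect pair state transfer from `(a,b)` to `(c,d)` at time `t`. -/
def PerfectPairStateTransfer [Fintype V] [DecidableEq V] (G : SimpleGraph V)
    [DecidableRel G.Adj] (t : ℝ) (a b c d : V) : Prop :=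
  ∃ γ : ℂ, ‖γ‖ = 1 ∧
    (transitionMatrix G t).mulVec (pairState a b) = γ • pairState c d

/- ### Auxiliary lemmas -/

theorem lap_herm [Fintype V] [DecidableEq V] (G : SimpleGraph V) [DecidableRel G.Adj] :
    (G.lapMatrix ℂ).IsHermitian := by
  ext i j
  simp [conjTranspose_apply, SimpleGraph.lapMatrix, SimpleGraph.degMatrix, diagonal_apply,
    G.adj_comm i j]
  rcases eq_or_ne i j with rfl | h
  · simp
  · simp [h, Ne.symm h]

theorem trans_symm [Fintype V] [DecidableEq V] (G : SimpleGraph V) [DecidableRel G.Adj] (t : ℝ) :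
    (transitionMatrix G t)ᵀ = transitionMatrix G t := by
  rw [transitionMatrix, ← Matrix.exp_transpose, transpose_smul, (SimpleGraph.isSymm_lapMatrix ℂ G)]

theorem trans_conjT [Fintype V] [DecidableEq V] (G : SimpleGraph V) [DecidableRel G.Adj] (t : ℝ) :
    (transitionMatrix G t)ᴴ = transitionMatrix G (-t) := by
  rw [transitionMatrix, ← Matrix.exp_conjTranspose, conjTranspose_smul, (lap_herm G)]
  congr 1
  simp

theorem trans_mul_neg [Fintype V] [DecidableEq V] (G : SimpleGraph V) [DecidableRel G.Adj]
    (t : ℝ) : transitionMatrix G t * transitionMatrix G (-t) = 1 := by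
  rw [transitionMatrix, transitionMatrix, ← Matrix.exp_add_of_commute]
  · rw [show (Complex.I * (t:ℂ)) • G.lapMatrix ℂ + (Complex.I * ((-t:ℝ):ℂ)) • G.lapMatrix ℂ
        = 0 by push_cast; rw [← add_smul]; ring_nf; exact zero_smul _ _]
    exact NormedSpace.exp_zero
  · exact ((Commute.refl (G.lapMatrix ℂ)).smul_left _).smul_right _

theorem trans_diag [Fintype V] [DecidableEq V] (G : SimpleGraph V) [DecidableRel G.Adj] (t : ℝ) :
    transitionMatrix G t =
      ((lap_herm G).eigenvectorUnitary : Matrix V V ℂ) *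
        diagonal (fun j => Complex.exp (Complex.I * t * ((lap_herm G).eigenvalues j)))
        * (star ((lap_herm G).eigenvectorUnitary : Matrix V V ℂ)) := by
  set hH := lap_herm G
  set Vm : Matrix V V ℂ := (hH.eigenvectorUnitary : Matrix V V ℂ) with hVm
  have h1 : star Vm * Vm = 1 := Unitary.coe_star_mul_self hH.eigenvectorUnitary
  have h2 : Vm * star Vm = 1 := Unitary.coe_mul_star_self hH.eigenvectorUnitary
  set U : (Matrix V V ℂ)ˣ := ⟨Vm, star Vm, h2, h1⟩ with hU
  have hUinv : (↑U⁻¹ : Matrix V V ℂ) = star Vm := rfl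
  have key : (Complex.I * (t:ℂ)) • G.lapMatrix ℂ =
      (U : Matrix V V ℂ) * ((Complex.I * (t:ℂ)) • diagonal (RCLike.ofReal ∘ hH.eigenvalues)) *
        (↑U⁻¹ : Matrix V V ℂ) := by
    conv_lhs => rw [hH.spectral_theorem]
    rw [Unitary.conjStarAlgAut_apply]
    rw [hUinv]
    simp only [hU, Units.val_mk, mul_smul_comm, smul_mul_assoc]
    rfl
  rw [transitionMatrix, key, Matrix.exp_units_conj]
  congr 1
  congr 1
  rw [← diagonal_smul]
  rw [Matrix.exp_diagonal]
  ext j k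
  simp only [diagonal_apply]
  split
  · simp [← Complex.exp_eq_exp_ℂ, Function.comp, Pi.smul_apply, smul_eq_mul, mul_assoc]
  · rfl

theorem star_pairState [DecidableEq V] (a b : V) : star (pairState a b) = pairState a b := by
  funext v
  simp only [Pi.star_apply, pairState, Pi.sub_apply, star_sub, Pi.single_apply]
  split_ifs <;> simp

theorem pairState_eq_iff [DecidableEq V] {a b c d : V} (hab : a ≠ b) (hcd : c ≠ d)
    (h : pairState a b = pairState c d) : a = c ∧ b = d := by
  have h1 := congrFun h a
  have h2 := congrFun h b
  have hac : a = c := by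
    by_contra h'
    rcases eq_or_ne a d with rfl | h''
    · norm_num [pairState, Pi.single_apply, hab, h'] at h1
    · norm_num [pairState, Pi.single_apply, hab, h', h''] at h1
  refine ⟨hac, ?_⟩
  by_contra h'
  rcases eq_or_ne b c with rfl | h''
  · exact hab hac
  · norm_num [pairState, Pi.single_apply, Ne.symm hab, h', h''] at h2

theorem neg_pairState [DecidableEq V] (a b : V) : -pairState a b = pairState b a := by
  simp [pairState]

theorem reverse_transfer [Fintype V] [DecidableEq V] (G : SimpleGraph V) [DecidableRel G.Adj]
    (t : ℝ) (γ : ℂ) (hγ : ‖γ‖ = 1) (a b c d : V)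
    (h : (transitionMatrix G t) *ᵥ (pairState a b) = γ • pairState c d) :
    (transitionMatrix G t) *ᵥ (pairState c d) = γ • pairState a b := by
  have hγc : γ * (starRingEnd ℂ) γ = 1 := by
    rw [Complex.mul_conj, ← Complex.sq_norm, hγ]; norm_num
  have hst := congrArg star h
  rw [Matrix.star_mulVec, star_pairState, trans_conjT, star_smul, star_pairState,
    ← trans_symm G (-t), Matrix.vecMul_transpose] at hst
  have h2 := congrArg (fun v => (transitionMatrix G t) *ᵥ v) hst
  simp only [Matrix.mulVec_mulVec, trans_mul_neg, Matrix.one_mulVec, Matrix.mulVec_smul] at h2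
  have h3 := congrArg (fun v => γ • v) h2
  simp only [smul_smul, Complex.star_def, hγc, one_smul] at h3
  exact h3.symm

theorem exp_I_one {r : ℝ} (h : Complex.exp (Complex.I * r) = 1) :
    ∃ n : ℤ, r = n * (2 * Real.pi) := by
  rw [Complex.exp_eq_one_iff] at h
  obtain ⟨n, hn⟩ := h
  refine ⟨n, ?_⟩
  have h2 : (r : ℂ) = (n : ℂ) * (2 * Real.pi) := by
    linear_combination (-Complex.I) * hn + ((r:ℂ) - n * (2*Real.pi)) * Complex.I_sq
  exact_mod_cast h2

theorem exp_pm (r : ℝ)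
    (h : Complex.exp (Complex.I * r) = 1 ∨ Complex.exp (Complex.I * r) = -1) :
    ∃ k : ℤ, r = k * Real.pi ∧ (Even k ↔ Complex.exp (Complex.I * r) = 1) := by
  rcases h with h | h
  · obtain ⟨n, hn⟩ := exp_I_one h
    exact ⟨2 * n, by rw [hn]; push_cast; ring, iff_of_true ⟨n, two_mul n⟩ h⟩
  · have h' : Complex.exp (Complex.I * ((r - Real.pi : ℝ) : ℂ)) = 1 := by
      push_cast
      rw [mul_sub, Complex.exp_sub, mul_comm Complex.I (Real.pi : ℂ), Complex.exp_pi_mul_I, h]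
      norm_num
    obtain ⟨n, hn⟩ := exp_I_one h'
    refine ⟨2 * n + 1, by push_cast; linarith, iff_of_false ?_ ?_⟩
    · intro he
      exact (Int.even_add_one.mp he) ⟨n, two_mul n⟩
    · intro he
      rw [h] at he
      norm_num at he

theorem compE [Fintype V] [DecidableEq V] (G : SimpleGraph V) [DecidableRel G.Adj]
    (t : ℝ) (γ : ℂ) (u v : V → ℂ)
    (h : (transitionMatrix G t) *ᵥ u = γ • v) (j : V) :
    Complex.exp (Complex.I * t * ((lap_herm G).eigenvalues j)) *
      ((star ((lap_herm G).eigenvectorUnitary : Matrix V V ℂ)) *ᵥ u) j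
    = γ * ((star ((lap_herm G).eigenvectorUnitary : Matrix V V ℂ)) *ᵥ v) j := by
  set Vm : Matrix V V ℂ := ((lap_herm G).eigenvectorUnitary : Matrix V V ℂ) with hVm
  have h1 : star Vm * Vm = 1 := Unitary.coe_star_mul_self (lap_herm G).eigenvectorUnitary
  rw [trans_diag] at h
  have h2 := congrArg (fun p => (star Vm) *ᵥ p) h
  simp only [Matrix.mulVec_mulVec, Matrix.mulVec_smul] at h2
  rw [show star Vm * (Vm * diagonal (fun j => Complex.exp (Complex.I * t *
      ((lap_herm G).eigenvalues j))) * star Vm)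
      = diagonal (fun j => Complex.exp (Complex.I * t * ((lap_herm G).eigenvalues j))) * star Vm
    by rw [← mul_assoc, ← mul_assoc, h1, one_mul]] at h2
  rw [← Matrix.mulVec_mulVec] at h2
  have h3 := congrFun h2 j
  simpa [Matrix.mulVec_diagonal] using h3

set_option maxHeartbeats 1600000 in
/-- Monogamy of perfect pair state transfer. -/
theorem pst_monogamy [Fintype V] [DecidableEq V] (G : SimpleGraph V) [DecidableRel G.Adj]
    (a b c d c' d' : V) (hab : a ≠ b) (hcd : c ≠ d) (hcd' : c' ≠ d')
    (hne : s(c, d) ≠ s(a, b)) (hne' : s(c', d') ≠ s(a, b))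
    (t₁ t₂ : ℝ) (ht₁ : 0 < t₁) (ht₂ : 0 < t₂)
    (h₁ : PerfectPairStateTransfer G t₁ a b c d)
    (h₂ : PerfectPairStateTransfer G t₂ a b c' d') :
    s(c, d) = s(c', d') := by
  obtain ⟨γ₁, hγ₁, heq₁⟩ := h₁
  obtain ⟨γ₂, hγ₂, heq₂⟩ := h₂
  have hrev₁ := reverse_transfer G t₁ γ₁ hγ₁ a b c d heq₁
  have hrev₂ := reverse_transfer G t₂ γ₂ hγ₂ a b c' d' heq₂
  set θ : V → ℝ := (lap_herm G).eigenvalues with hθ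
  set Vm : Matrix V V ℂ := ((lap_herm G).eigenvectorUnitary : Matrix V V ℂ) with hVm
  have hVVs : Vm * star Vm = 1 := Unitary.coe_mul_star_self (lap_herm G).eigenvectorUnitary
  have recov : ∀ u : V → ℂ, Vm *ᵥ ((star Vm) *ᵥ u) = u := by
    intro u
    rw [Matrix.mulVec_mulVec, hVVs, Matrix.one_mulVec]
  set x : V → ℂ := pairState a b with hx
  set y : V → ℂ := pairState c d with hy
  set y' : V → ℂ := pairState c' d' with hy'
  set z : V → ℂ := (star Vm) *ᵥ x with hzdef
  set w : V → ℂ := (star Vm) *ᵥ y with hwdef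
  set w' : V → ℂ := (star Vm) *ᵥ y' with hw'def
  have E1 : ∀ j, Complex.exp (Complex.I * t₁ * θ j) * z j = γ₁ * w j :=
    fun j => compE G t₁ γ₁ x y heq₁ j
  have E2 : ∀ j, Complex.exp (Complex.I * t₁ * θ j) * w j = γ₁ * z j :=
    fun j => compE G t₁ γ₁ y x hrev₁ j
  have E3 : ∀ j, Complex.exp (Complex.I * t₂ * θ j) * z j = γ₂ * w' j :=
    fun j => compE G t₂ γ₂ x y' heq₂ j
  have E4 : ∀ j, Complex.exp (Complex.I * t₂ * θ j) * w' j = γ₂ * z j :=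
    fun j => compE G t₂ γ₂ y' x hrev₂ j
  have hγ₁c : (starRingEnd ℂ) γ₁ * γ₁ = 1 := by
    rw [mul_comm, Complex.mul_conj, ← Complex.sq_norm, hγ₁]; norm_num
  have hγ₂c : (starRingEnd ℂ) γ₂ * γ₂ = 1 := by
    rw [mul_comm, Complex.mul_conj, ← Complex.sq_norm, hγ₂]; norm_num
  set lam : V → ℂ := fun j => (starRingEnd ℂ) γ₁ * Complex.exp (Complex.I * t₁ * θ j)
    with hlamdef
  set mu : V → ℂ := fun j => (starRingEnd ℂ) γ₂ * Complex.exp (Complex.I * t₂ * θ j)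
    with hmudef
  have hw : ∀ j, w j = lam j * z j := by
    intro j
    have h := E1 j
    calc w j = ((starRingEnd ℂ) γ₁ * γ₁) * w j := by rw [hγ₁c, one_mul]
      _ = (starRingEnd ℂ) γ₁ * (γ₁ * w j) := by ring
      _ = (starRingEnd ℂ) γ₁ * (Complex.exp (Complex.I * t₁ * θ j) * z j) := by rw [h]
      _ = lam j * z j := by rw [hlamdef]; ring
  have hw' : ∀ j, w' j = mu j * z j := by
    intro j
    have h := E3 j
    calc w' j = ((starRingEnd ℂ) γ₂ * γ₂) * w' j := by rw [hγ₂c, one_mul]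
      _ = (starRingEnd ℂ) γ₂ * (γ₂ * w' j) := by ring
      _ = (starRingEnd ℂ) γ₂ * (Complex.exp (Complex.I * t₂ * θ j) * z j) := by rw [h]
      _ = mu j * z j := by rw [hmudef]; ring
  have hEL : ∀ j, z j ≠ 0 → Complex.exp (Complex.I * t₁ * θ j) * lam j = γ₁ := by
    intro j hzj
    have h := E2 j
    rw [hw j, show Complex.exp (Complex.I * t₁ * θ j) * (lam j * z j)
      = (Complex.exp (Complex.I * t₁ * θ j) * lam j) * z j by ring] at h
    exact mul_right_cancel₀ hzj h
  have hEM : ∀ j, z j ≠ 0 → Complex.exp (Complex.I * t₂ * θ j) * mu j = γ₂ := by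
    intro j hzj
    have h := E4 j
    rw [hw' j, show Complex.exp (Complex.I * t₂ * θ j) * (mu j * z j)
      = (Complex.exp (Complex.I * t₂ * θ j) * mu j) * z j by ring] at h
    exact mul_right_cancel₀ hzj h
  have hlamsq : ∀ j, z j ≠ 0 → lam j * lam j = 1 := by
    intro j hzj
    calc lam j * lam j = (starRingEnd ℂ) γ₁ * (Complex.exp (Complex.I * t₁ * θ j) * lam j) := by
          rw [hlamdef]; ring
      _ = (starRingEnd ℂ) γ₁ * γ₁ := by rw [hEL j hzj]
      _ = 1 := hγ₁c
  have hmusq : ∀ j, z j ≠ 0 → mu j * mu j = 1 := by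
    intro j hzj
    calc mu j * mu j = (starRingEnd ℂ) γ₂ * (Complex.exp (Complex.I * t₂ * θ j) * mu j) := by
          rw [hmudef]; ring
      _ = (starRingEnd ℂ) γ₂ * γ₂ := by rw [hEM j hzj]
      _ = 1 := hγ₂c
  have hlpm : ∀ j, z j ≠ 0 → lam j = 1 ∨ lam j = -1 :=
    fun j hzj => mul_self_eq_one_iff.mp (hlamsq j hzj)
  have hmpm : ∀ j, z j ≠ 0 → mu j = 1 ∨ mu j = -1 :=
    fun j hzj => mul_self_eq_one_iff.mp (hmusq j hzj)
  -- existence of a support point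
  have hxz : Vm *ᵥ z = x := recov x
  obtain ⟨j₀, hzj₀⟩ : ∃ j, z j ≠ 0 := by
    by_contra hcon
    push_neg at hcon
    have hz0 : z = 0 := funext hcon
    have : x = 0 := by rw [← hxz, hz0, Matrix.mulVec_zero]
    have hxa := congrFun this a
    simp [hx, pairState, Pi.single_apply, hab] at hxa
  -- relation lemmas
  have hrel₁ : ∀ j, z j ≠ 0 →
      Complex.exp (Complex.I * ((t₁ * (θ j - θ j₀) : ℝ) : ℂ)) = lam j * lam j₀ := by
    intro j hzj
    have hsplit : Complex.exp (Complex.I * t₁ * θ j)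
        = Complex.exp (Complex.I * ((t₁ * (θ j - θ j₀) : ℝ) : ℂ)) * Complex.exp (Complex.I * t₁ * θ j₀) := by
      rw [← Complex.exp_add]
      congr 1
      push_cast
      ring
    have h0 := hEL j₀ hzj₀
    rw [hlamdef]
    simp only []
    rw [hsplit]
    linear_combination (-(starRingEnd ℂ γ₁ * Complex.exp (Complex.I * ((t₁ * (θ j - θ j₀) : ℝ) : ℂ)))) * h0
      - Complex.exp (Complex.I * ((t₁ * (θ j - θ j₀) : ℝ) : ℂ)) * hγ₁c
  have hrel₂ : ∀ j, z j ≠ 0 →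
      Complex.exp (Complex.I * ((t₂ * (θ j - θ j₀) : ℝ) : ℂ)) = mu j * mu j₀ := by
    intro j hzj
    have hsplit : Complex.exp (Complex.I * t₂ * θ j)
        = Complex.exp (Complex.I * ((t₂ * (θ j - θ j₀) : ℝ) : ℂ)) * Complex.exp (Complex.I * t₂ * θ j₀) := by
      rw [← Complex.exp_add]
      congr 1
      push_cast
      ring
    have h0 := hEM j₀ hzj₀
    rw [hmudef]
    simp only []
    rw [hsplit]
    linear_combination (-(starRingEnd ℂ γ₂ * Complex.exp (Complex.I * ((t₂ * (θ j - θ j₀) : ℝ) : ℂ)))) * h0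
      - Complex.exp (Complex.I * ((t₂ * (θ j - θ j₀) : ℝ) : ℂ)) * hγ₂c
  -- the integers
  have getkm : ∀ j, z j ≠ 0 → ∃ k m : ℤ,
      (Even k ↔ lam j * lam j₀ = 1) ∧ (Even m ↔ mu j * mu j₀ = 1) ∧
      (k : ℝ) * t₂ = (m : ℝ) * t₁ := by
    intro j hzj
    have hpm1 : Complex.exp (Complex.I * ((t₁ * (θ j - θ j₀) : ℝ) : ℂ)) = 1 ∨
        Complex.exp (Complex.I * ((t₁ * (θ j - θ j₀) : ℝ) : ℂ)) = -1 := by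
      rw [hrel₁ j hzj]
      rcases hlpm j hzj with h | h <;> rcases hlpm j₀ hzj₀ with h0 | h0 <;>
        rw [h, h0] <;> norm_num
    have hpm2 : Complex.exp (Complex.I * ((t₂ * (θ j - θ j₀) : ℝ) : ℂ)) = 1 ∨
        Complex.exp (Complex.I * ((t₂ * (θ j - θ j₀) : ℝ) : ℂ)) = -1 := by
      rw [hrel₂ j hzj]
      rcases hmpm j hzj with h | h <;> rcases hmpm j₀ hzj₀ with h0 | h0 <;>
        rw [h, h0] <;> norm_num
    obtain ⟨k, hk, hkiff⟩ := exp_pm _ hpm1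
    obtain ⟨m, hm, hmiff⟩ := exp_pm _ hpm2
    rw [hrel₁ j hzj] at hkiff
    rw [hrel₂ j hzj] at hmiff
    refine ⟨k, m, hkiff, hmiff, ?_⟩
    have hr : ((k : ℝ) * t₂) * Real.pi = ((m : ℝ) * t₁) * Real.pi := by
      linear_combination t₁ * hm - t₂ * hk
    exact mul_right_cancel₀ Real.pi_ne_zero hr
  -- products are ±1 and detect equality
  have prodl : ∀ j, z j ≠ 0 → (lam j * lam j₀ = 1 ↔ lam j = lam j₀) := by
    intro j hzj
    rcases hlpm j hzj with h | h <;> rcases hlpm j₀ hzj₀ with h0 | h0 <;>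
      rw [h, h0] <;> norm_num
  have prodm : ∀ j, z j ≠ 0 → (mu j * mu j₀ = 1 ↔ mu j = mu j₀) := by
    intro j hzj
    rcases hmpm j hzj with h | h <;> rcases hmpm j₀ hzj₀ with h0 | h0 <;>
      rw [h, h0] <;> norm_num
  have prodl_pm : ∀ j, z j ≠ 0 → lam j * lam j₀ = 1 ∨ lam j * lam j₀ = -1 := by
    intro j hzj
    rcases hlpm j hzj with h | h <;> rcases hlpm j₀ hzj₀ with h0 | h0 <;>
      rw [h, h0] <;> norm_num
  have prodm_pm : ∀ j, z j ≠ 0 → mu j * mu j₀ = 1 ∨ mu j * mu j₀ = -1 := by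
    intro j hzj
    rcases hmpm j hzj with h | h <;> rcases hmpm j₀ hzj₀ with h0 | h0 <;>
      rw [h, h0] <;> norm_num
  -- case A : y is proportional to x, contradiction
  by_cases hA : ∀ j, z j ≠ 0 → lam j = lam j₀
  · exfalso
    have hwz : ∀ j, w j = lam j₀ * z j := by
      intro j
      by_cases hzj : z j = 0
      · rw [hw j, hzj, mul_zero, mul_zero]
      · rw [hw j, hA j hzj]
    have hyx : y = lam j₀ • x := by
      have hwz' : w = lam j₀ • z := funext fun j => by
        rw [hwz j]; rfl
      calc y = Vm *ᵥ w := (recov y).symm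
        _ = Vm *ᵥ (lam j₀ • z) := by rw [hwz']
        _ = lam j₀ • (Vm *ᵥ z) := Matrix.mulVec_smul _ _ _
        _ = lam j₀ • x := by rw [hxz]
    rcases hlpm j₀ hzj₀ with h0 | h0
    · rw [h0, one_smul] at hyx
      obtain ⟨rfl, rfl⟩ := pairState_eq_iff hcd hab hyx
      exact hne rfl
    · rw [h0, neg_smul, one_smul] at hyx
      have hyx' : y = pairState b a := by rw [hyx, hx, neg_pairState]
      obtain ⟨rfl, rfl⟩ := pairState_eq_iff hcd (Ne.symm hab) hyx'
      exact hne (Sym2.eq_swap)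
  by_cases hB : ∀ j, z j ≠ 0 → mu j = mu j₀
  · exfalso
    have hwz : ∀ j, w' j = mu j₀ * z j := by
      intro j
      by_cases hzj : z j = 0
      · rw [hw' j, hzj, mul_zero, mul_zero]
      · rw [hw' j, hB j hzj]
    have hyx : y' = mu j₀ • x := by
      have hwz' : w' = mu j₀ • z := funext fun j => by
        rw [hwz j]; rfl
      calc y' = Vm *ᵥ w' := (recov y').symm
        _ = Vm *ᵥ (mu j₀ • z) := by rw [hwz']
        _ = mu j₀ • (Vm *ᵥ z) := Matrix.mulVec_smul _ _ _
        _ = mu j₀ • x := by rw [hxz]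
    rcases hmpm j₀ hzj₀ with h0 | h0
    · rw [h0, one_smul] at hyx
      obtain ⟨rfl, rfl⟩ := pairState_eq_iff hcd' hab hyx
      exact hne' rfl
    · rw [h0, neg_smul, one_smul] at hyx
      have hyx' : y' = pairState b a := by rw [hyx, hx, neg_pairState]
      obtain ⟨rfl, rfl⟩ := pairState_eq_iff hcd' (Ne.symm hab) hyx'
      exact hne' (Sym2.eq_swap)
  -- main case
  push_neg at hA hB
  obtain ⟨j₁, hzj₁, hne₁⟩ := hA
  obtain ⟨j₂, hzj₂, hne₂⟩ := hB
  obtain ⟨k₁, m₁, hk₁iff, hm₁iff, hktm₁⟩ := getkm j₁ hzj₁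
  obtain ⟨k₂, m₂, hk₂iff, hm₂iff, hktm₂⟩ := getkm j₂ hzj₂
  have hk₁odd : ¬ Even k₁ := fun he => hne₁ ((prodl j₁ hzj₁).mp (hk₁iff.mp he))
  have hm₂odd : ¬ Even m₂ := fun he => hne₂ ((prodm j₂ hzj₂).mp (hm₂iff.mp he))
  have key : ∀ j, z j ≠ 0 → mu j * mu j₀ = lam j * lam j₀ := by
    intro j hzj
    obtain ⟨k, m, hkiff, hmiff, hktm⟩ := getkm j hzj
    have c1 : k * m₁ = k₁ * m := by
      have hr : ((k * m₁ : ℤ) : ℝ) * t₁ = ((k₁ * m : ℤ) : ℝ) * t₁ := by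
        push_cast
        linear_combination (k₁ : ℝ) * hktm - (k : ℝ) * hktm₁
      exact_mod_cast mul_right_cancel₀ (ne_of_gt ht₁) hr
    have c2 : k * m₂ = k₂ * m := by
      have hr : ((k * m₂ : ℤ) : ℝ) * t₁ = ((k₂ * m : ℤ) : ℝ) * t₁ := by
        push_cast
        linear_combination (k₂ : ℝ) * hktm - (k : ℝ) * hktm₂
      exact_mod_cast mul_right_cancel₀ (ne_of_gt ht₁) hr
    have parity : Even k ↔ Even m := by
      constructor
      · intro he
        by_contra hm'
        have hev : Even (k₁ * m) := c1 ▸ he.mul_right m₁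
        rcases Int.even_mul.mp hev with h | h
        · exact hk₁odd h
        · exact hm' h
      · intro he
        by_contra hk'
        have hev : Even (k * m₂) := c2 ▸ he.mul_left k₂
        rcases Int.even_mul.mp hev with h | h
        · exact hk' h
        · exact hm₂odd h
    rcases prodl_pm j hzj with h | h <;> rcases prodm_pm j hzj with h' | h'
    · rw [h, h']
    · exfalso
      have : Even m := (parity.mp (hkiff.mpr h))
      rw [hmiff.mp this] at h'
      norm_num at h'
    · exfalso
      have : Even k := (parity.mpr (hmiff.mpr h'))
      rw [hkiff.mp this] at h
      norm_num at h
    · rw [h, h']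
  -- conclude : y' = (mu j₀ * lam j₀) • y
  set cc : ℂ := mu j₀ * lam j₀ with hccdef
  have hccpm : cc = 1 ∨ cc = -1 := by
    rcases hlpm j₀ hzj₀ with h | h <;> rcases hmpm j₀ hzj₀ with h' | h' <;>
      rw [hccdef, h, h'] <;> norm_num
  have hmuc : ∀ j, z j ≠ 0 → mu j = cc * lam j := by
    intro j hzj
    have hk := key j hzj
    have h0 : mu j₀ * mu j₀ = 1 := hmusq j₀ hzj₀
    rw [hccdef]
    linear_combination (mu j₀) * hk - (mu j) * h0
  have hw'c : ∀ j, w' j = cc * w j := by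
    intro j
    by_cases hzj : z j = 0
    · rw [hw j, hw' j, hzj, mul_zero, mul_zero, mul_zero]
    · rw [hw j, hw' j, hmuc j hzj]
      ring
  have hyy : y' = cc • y := by
    have hwc : w' = cc • w := funext fun j => by rw [hw'c j]; rfl
    calc y' = Vm *ᵥ w' := (recov y').symm
      _ = Vm *ᵥ (cc • w) := by rw [hwc]
      _ = cc • (Vm *ᵥ w) := Matrix.mulVec_smul _ _ _
      _ = cc • y := by rw [recov y]
  rcases hccpm with h | h
  · rw [h, one_smul] at hyy
    obtain ⟨rfl, rfl⟩ := pairState_eq_iff hcd' hcd hyy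
    rfl
  · rw [h, neg_smul, one_smul] at hyy
    have hyy' : y' = pairState d c := by rw [hyy, hy, neg_pairState]
    obtain ⟨rfl, rfl⟩ := pairState_eq_iff hcd' (Ne.symm hcd) hyy'
    exact Sym2.eq_swap.symm
end

section
/- Let G be a finite simple edge-transitive graph with an odd number of edges. Then there is no perfect edge state transfer in G: there do not exist edges {a,b} and {c,d} of G with {a,b} ≠ {c,d}, a time t, and γ ∈ ℂ with |γ| = 1 such that exp(itL)(e_a − e_b) = γ(e_c − e_d), where L is the Laplacian of G. -/
open Matrix

variable {V : Type*}

/-! ### Auxiliary lemmas -/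

section PairState

variable [DecidableEq V]

lemma pairState_apply (a b i : V) :
    pairState a b i = (if i = a then 1 else 0) - (if i = b then 1 else 0) := by
  simp [pairState, Pi.single_apply]

lemma pairState_neg (a b : V) : pairState b a = -pairState a b := by
  funext i
  simp only [pairState_apply, Pi.neg_apply]
  ring

lemma pairState_inj {a b c d : V} (hab : a ≠ b) (hcd : c ≠ d)
    (h : pairState a b = pairState c d) : a = c ∧ b = d := by
  have ha := congrFun h a
  have hb := congrFun h b
  rw [pairState_apply, pairState_apply] at ha hb
  rw [if_pos rfl, if_neg hab] at ha
  rw [if_pos rfl, if_neg (Ne.symm hab)] at hb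
  constructor
  · by_contra hac
    rw [if_neg hac] at ha
    split_ifs at ha <;> norm_num at ha
  · by_contra hbd
    rw [if_neg hbd] at hb
    split_ifs at hb <;> norm_num at hb

lemma pairState_sym2 {a b c d : V} (hab : a ≠ b) (hcd : c ≠ d) {μ : ℂ}
    (hμ : μ = 1 ∨ μ = -1) (h : pairState a b = μ • pairState c d) :
    s(a, b) = s(c, d) := by
  rcases hμ with rfl | rfl
  · rw [one_smul] at h
    obtain ⟨rfl, rfl⟩ := pairState_inj hab hcd h
    rfl
  · rw [neg_smul, one_smul, ← pairState_neg] at h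
    obtain ⟨rfl, rfl⟩ := pairState_inj hab hcd.symm h
    exact Sym2.eq_swap

/-- entrywise complex conjugation of a vector -/
def conjVec (x : V → ℂ) : V → ℂ := fun i => (starRingEnd ℂ) (x i)

lemma conjVec_smul (γ : ℂ) (x : V → ℂ) :
    conjVec (γ • x) = (starRingEnd ℂ) γ • conjVec x := by
  funext i
  simp [conjVec]

lemma conjVec_pairState (a b : V) : conjVec (pairState a b) = pairState a b := by
  funext i
  simp [conjVec, pairState_apply, apply_ite (starRingEnd ℂ)]

end PairState

section Matrices

variable [Fintype V] [DecidableEq V]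

lemma conjVec_mulVec (M : Matrix V V ℂ) (x : V → ℂ) :
    conjVec (M.mulVec x) = (M.map (starRingEnd ℂ)).mulVec (conjVec x) := by
  funext i
  simp [conjVec, Matrix.mulVec, dotProduct, map_sum, Matrix.map_apply]

lemma mulVec_equiv (M : Matrix V V ℂ) (e : V ≃ V) (h : M.submatrix e e = M) (x : V → ℂ) :
    M.mulVec (x ∘ e) = (M.mulVec x) ∘ e := by
  funext i
  show ∑ j, M i j * x (e j) = ∑ j, M (e i) j * x j
  rw [← Equiv.sum_comp e (fun j => M (e i) j * x j)]
  refine Finset.sum_congr rfl fun j _ => ?_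
  have := congrFun (congrFun h i) j
  rw [Matrix.submatrix_apply] at this
  rw [this]

lemma pairState_comp (e : V ≃ V) (a b : V) :
    pairState a b ∘ ⇑e.symm = pairState (e a) (e b) := by
  funext i
  simp [pairState_apply, Function.comp, Equiv.symm_apply_eq]

variable (G : SimpleGraph V) [DecidableRel G.Adj]

lemma degree_iso (σ : G ≃g G) (v : V) : G.degree (σ v) = G.degree v := by
  rw [← SimpleGraph.card_neighborSet_eq_degree, ← SimpleGraph.card_neighborSet_eq_degree]
  exact Fintype.card_congr (σ.mapNeighborSet v).symm

lemma lap_submatrix (σ : G ≃g G) :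
    (G.lapMatrix ℂ).submatrix ⇑σ.toEquiv ⇑σ.toEquiv = G.lapMatrix ℂ := by
  ext i j
  simp only [Matrix.submatrix_apply, SimpleGraph.lapMatrix, Matrix.sub_apply,
    SimpleGraph.degMatrix, Matrix.diagonal_apply, SimpleGraph.adjMatrix_apply]
  have h1 : (σ.toEquiv i = σ.toEquiv j) ↔ (i = j) := by
    exact ⟨fun h => σ.toEquiv.injective h, fun h => by rw [h]⟩
  have h2 : G.Adj (σ.toEquiv i) (σ.toEquiv j) ↔ G.Adj i j := σ.map_adj_iff
  have h3 : G.degree (σ.toEquiv i) = G.degree i := degree_iso G σ i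
  rw [if_congr h1 (by rw [h3]) rfl, if_congr h2 rfl rfl]

lemma lap_star_entry (i j : V) :
    star (G.lapMatrix ℂ i j) = G.lapMatrix ℂ i j := by
  simp [SimpleGraph.lapMatrix, SimpleGraph.degMatrix, Matrix.sub_apply,
    Matrix.diagonal_apply, SimpleGraph.adjMatrix_apply, apply_ite (star : ℂ → ℂ)]

lemma lap_conjTranspose : (G.lapMatrix ℂ)ᴴ = G.lapMatrix ℂ := by
  ext i j
  rw [Matrix.conjTranspose_apply, (G.isSymm_lapMatrix ℂ).apply, lap_star_entry]

lemma transition_submatrix (σ : G ≃g G) (t : ℝ) :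
    (transitionMatrix G t).submatrix ⇑σ.toEquiv ⇑σ.toEquiv = transitionMatrix G t := by
  letI : SeminormedRing (Matrix V V ℂ) := Matrix.linftyOpSemiNormedRing
  letI : NormedRing (Matrix V V ℂ) := Matrix.linftyOpNormedRing
  letI : NormedAlgebra ℂ (Matrix V V ℂ) := Matrix.linftyOpNormedAlgebra
  letI : NormedAlgebra ℚ (Matrix V V ℂ) := Matrix.linftyOpNormedAlgebra
  have hcont : Continuous ⇑(Matrix.reindexAlgEquiv ℂ ℂ σ.toEquiv.symm) :=
    LinearMap.continuous_of_finiteDimensional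
      (Matrix.reindexAlgEquiv ℂ ℂ σ.toEquiv.symm).toLinearMap
  have hmap := NormedSpace.map_exp (Matrix.reindexAlgEquiv ℂ ℂ σ.toEquiv.symm) hcont
    ((Complex.I * (t : ℂ)) • G.lapMatrix ℂ)
  have hre : (Matrix.reindexAlgEquiv ℂ ℂ σ.toEquiv.symm)
      ((Complex.I * (t : ℂ)) • G.lapMatrix ℂ) = (Complex.I * (t : ℂ)) • G.lapMatrix ℂ := by
    rw [Matrix.reindexAlgEquiv_apply, Matrix.reindex_apply, Equiv.symm_symm]
    ext i j
    rw [Matrix.submatrix_apply, Matrix.smul_apply, Matrix.smul_apply]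
    congr 1
    have hl := congrFun (congrFun (lap_submatrix G σ) i) j
    rwa [Matrix.submatrix_apply] at hl
  have : (Matrix.reindexAlgEquiv ℂ ℂ σ.toEquiv.symm) (transitionMatrix G t)
      = transitionMatrix G t := by
    rw [transitionMatrix]
    exact hmap.trans (congrArg NormedSpace.exp hre)
  rw [Matrix.reindexAlgEquiv_apply, Matrix.reindex_apply, Equiv.symm_symm] at this
  exact this

lemma transition_transpose (t : ℝ) :
    (transitionMatrix G t)ᵀ = transitionMatrix G t := by
  rw [transitionMatrix, ← Matrix.exp_transpose]
  congr 1
  rw [Matrix.transpose_smul, (G.isSymm_lapMatrix ℂ).eq]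

lemma transition_map_star (t : ℝ) :
    (transitionMatrix G t).map (starRingEnd ℂ) = transitionMatrix G (-t) := by
  have h2 : (transitionMatrix G t)ᴴ = transitionMatrix G (-t) := by
    rw [transitionMatrix, transitionMatrix, ← Matrix.exp_conjTranspose ((Complex.I * (t : ℂ)) • G.lapMatrix ℂ)]
    congr 1
    rw [Matrix.conjTranspose_smul, lap_conjTranspose]
    congr 1
    simp [Complex.ext_iff]
  have hsy : (transitionMatrix G t).IsSymm := transition_transpose G t
  ext i j
  rw [Matrix.map_apply, ← h2, Matrix.conjTranspose_apply, hsy.apply i j]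
  rfl

lemma transition_mul_neg (t : ℝ) :
    transitionMatrix G t * transitionMatrix G (-t) = 1 := by
  rw [transitionMatrix, transitionMatrix, ← Matrix.exp_add_of_commute]
  · have h0 : (Complex.I * (t : ℂ)) • G.lapMatrix ℂ
        + (Complex.I * ((-t : ℝ) : ℂ)) • G.lapMatrix ℂ = 0 := by
      rw [← add_smul]
      have : Complex.I * (t : ℂ) + Complex.I * ((-t : ℝ) : ℂ) = 0 := by
        push_cast
        ring
      rw [this, zero_smul]
    rw [h0, NormedSpace.exp_zero]
  · exact ((Commute.refl (G.lapMatrix ℂ)).smul_left _).smul_right _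

lemma transition_symm_transfer {t : ℝ} {γ : ℂ} (hγ : ‖γ‖ = 1) {a b c d : V}
    (h : (transitionMatrix G t).mulVec (pairState a b) = γ • pairState c d) :
    (transitionMatrix G t).mulVec (pairState c d) = γ • pairState a b := by
  have hγ1 : γ * (starRingEnd ℂ) γ = 1 := by
    rw [Complex.mul_conj, Complex.normSq_eq_norm_sq, hγ]
    norm_num
  have h' := congrArg conjVec h
  rw [conjVec_mulVec, conjVec_smul, conjVec_pairState, conjVec_pairState,
    transition_map_star] at h'
  -- h' : (U (-t)).mulVec (pairState a b) = conj γ • pairState c d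
  have h2 := congrArg (fun y => (transitionMatrix G t).mulVec y) h'
  simp only [Matrix.mulVec_mulVec, Matrix.mulVec_smul] at h2
  rw [transition_mul_neg, Matrix.one_mulVec] at h2
  -- h2 : pairState a b = conj γ • (U t).mulVec (pairState c d)
  rw [h2, smul_smul, hγ1, one_smul]

end Matrices

/-- An involution on a finite type of odd cardinality has a fixed point. -/
lemma exists_fixed_of_odd {α : Type*} [Fintype α] (h : Odd (Fintype.card α))
    (f : α → α) (hf : ∀ x, f (f x) = x) : ∃ x, f x = x := by
  by_contra hc
  push_neg at hc
  have h0 : ∑ _x : α, (1 : ZMod 2) = 0 :=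
    Finset.sum_ninvolution f (fun a => by decide) (fun a _ => hc a)
      (fun a => Finset.mem_univ _) hf
  rw [Finset.sum_const, Finset.card_univ, nsmul_eq_mul, mul_one] at h0
  have h2 := (ZMod.natCast_eq_zero_iff _ 2).mp h0
  obtain ⟨k, hk⟩ := h2
  obtain ⟨m, hm⟩ := h
  omega

/-- An edge-transitive graph with an odd number of edges has no perfect edge state
transfer. -/
theorem no_pst_odd_edge_transitive [Fintype V] [DecidableEq V] (G : SimpleGraph V)
    [DecidableRel G.Adj]
    (hET : ∀ e ∈ G.edgeSet, ∀ f ∈ G.edgeSet, ∃ σ : G ≃g G, Sym2.map σ e = f)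
    (hodd : Odd G.edgeFinset.card) :
    ¬ ∃ (a b c d : V) (t : ℝ), G.Adj a b ∧ G.Adj c d ∧ s(a, b) ≠ s(c, d) ∧
        PerfectPairStateTransfer G t a b c d := by
  rintro ⟨a, b, c, d, t, hab, hcd, hne, γ, hγ, hU⟩
  have hγ0 : γ ≠ 0 := by
    intro h
    rw [h] at hγ
    simp at hγ
  set U := transitionMatrix G t with hUdef
  -- transport along automorphisms
  have htrans : ∀ (σ : G ≃g G) (μ : ℂ) (u v w x : V),
      U.mulVec (pairState u v) = μ • pairState w x →
      U.mulVec (pairState (σ.toEquiv u) (σ.toEquiv v))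
        = μ • pairState (σ.toEquiv w) (σ.toEquiv x) := by
    intro σ μ u v w x h
    have hsub : U.submatrix ⇑σ.toEquiv.symm ⇑σ.toEquiv.symm = U := by
      have := transition_submatrix G σ.symm t
      exact this
    calc U.mulVec (pairState (σ.toEquiv u) (σ.toEquiv v))
        = U.mulVec (pairState u v ∘ ⇑σ.toEquiv.symm) := by
          rw [pairState_comp σ.toEquiv u v]
      _ = (U.mulVec (pairState u v)) ∘ ⇑σ.toEquiv.symm := by
          rw [mulVec_equiv U σ.toEquiv.symm hsub]
      _ = (μ • pairState w x) ∘ ⇑σ.toEquiv.symm := by rw [h]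
      _ = μ • (pairState w x ∘ ⇑σ.toEquiv.symm) := rfl
      _ = μ • pairState (σ.toEquiv w) (σ.toEquiv x) := by
          rw [pairState_comp σ.toEquiv w x]
  -- the transfer relation on edges
  set Rel : Sym2 V → Sym2 V → Prop := fun e f => ∃ u v w x : V,
    G.Adj u v ∧ G.Adj w x ∧ e = s(u, v) ∧ f = s(w, x) ∧
      U.mulVec (pairState u v) = γ • pairState w x with hRel
  have rel_exists : ∀ e ∈ G.edgeSet, ∃ f ∈ G.edgeSet, Rel e f := by
    intro e
    induction e using Sym2.ind with
    | _ u v =>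
      intro he
      rw [SimpleGraph.mem_edgeSet] at he
      obtain ⟨σ, hσ⟩ := hET s(a, b) ((SimpleGraph.mem_edgeSet G).mpr hab) s(u, v)
        ((SimpleGraph.mem_edgeSet G).mpr he)
      rw [Sym2.map_pair_eq, Sym2.eq_iff] at hσ
      have h0 := htrans σ γ a b c d hU
      have hadj : G.Adj (σ.toEquiv c) (σ.toEquiv d) := σ.map_adj_iff.mpr hcd
      rcases hσ with ⟨h1, h2⟩ | ⟨h1, h2⟩
      · refine ⟨s(σ.toEquiv c, σ.toEquiv d), (SimpleGraph.mem_edgeSet G).mpr hadj,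
          u, v, σ.toEquiv c, σ.toEquiv d, he, hadj, rfl, rfl, ?_⟩
        rw [show u = σ.toEquiv a from h1.symm, show v = σ.toEquiv b from h2.symm]
        exact h0
      · refine ⟨s(σ.toEquiv d, σ.toEquiv c), (SimpleGraph.mem_edgeSet G).mpr hadj.symm,
          u, v, σ.toEquiv d, σ.toEquiv c, he, hadj.symm, rfl, rfl, ?_⟩
        have hp : pairState u v = -(pairState (σ.toEquiv a) (σ.toEquiv b)) := by
          rw [show u = σ.toEquiv b from h2.symm, show v = σ.toEquiv a from h1.symm]
          exact pairState_neg _ _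
        rw [hp, Matrix.mulVec_neg, h0, pairState_neg (σ.toEquiv c) (σ.toEquiv d),
          smul_neg]
  have rel_unique : ∀ e f f', Rel e f → Rel e f' → f = f' := by
    rintro e f f' ⟨u, v, w, x, huv, hwx, he1, rfl, h1⟩
      ⟨u', v', w', x', hu'v', hw'x', he2, rfl, h2⟩
    have heq : s(u, v) = s(u', v') := he1.symm.trans he2
    rw [Sym2.eq_iff] at heq
    rcases heq with ⟨rfl, rfl⟩ | ⟨rfl, rfl⟩
    · have := h1.symm.trans h2
      have hpp := smul_right_injective (V → ℂ) hγ0 this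
      obtain ⟨rfl, rfl⟩ := pairState_inj hwx.ne hw'x'.ne hpp
      rfl
    · have hp : pairState v u = -(pairState u v) := pairState_neg u v
      rw [hp, Matrix.mulVec_neg, h1] at h2
      have : γ • pairState w x = γ • (- pairState w' x') := by
        rw [smul_neg, ← h2, neg_neg]
      have hpp := smul_right_injective (V → ℂ) hγ0 this
      rw [← pairState_neg] at hpp
      obtain ⟨rfl, rfl⟩ := pairState_inj hwx.ne hw'x'.ne.symm hpp
      exact Sym2.eq_swap
  have rel_symm : ∀ e f, Rel e f → Rel f e := by
    rintro e f ⟨u, v, w, x, huv, hwx, he, hf, h1⟩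
    exact ⟨w, x, u, v, hwx, huv, hf, he, transition_symm_transfer G hγ h1⟩
  have rel_irrefl : ∀ e ∈ G.edgeSet, ¬ Rel e e := by
    rintro e he ⟨u, v, w, x, huv, hwx, he1, he2, h1⟩
    have hsv : s(u, v) = s(w, x) := he1.symm.trans he2
    rw [Sym2.eq_iff] at hsv
    obtain ⟨δ, hδ, heig⟩ : ∃ δ : ℂ, (δ = γ ∨ δ = -γ) ∧
        U.mulVec (pairState u v) = δ • pairState u v := by
      rcases hsv with ⟨rfl, rfl⟩ | ⟨rfl, rfl⟩
      · exact ⟨γ, Or.inl rfl, h1⟩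
      · refine ⟨-γ, Or.inr rfl, ?_⟩
        rw [h1, pairState_neg u v]
        rw [smul_neg, neg_smul]
    obtain ⟨σ, hσ⟩ := hET s(u, v) ((SimpleGraph.mem_edgeSet G).mpr huv) s(a, b)
      ((SimpleGraph.mem_edgeSet G).mpr hab)
    have h2 := htrans σ δ u v u v heig
    rw [Sym2.map_pair_eq, Sym2.eq_iff] at hσ
    have h3 : U.mulVec (pairState a b) = δ • pairState a b := by
      rcases hσ with ⟨h4, h5⟩ | ⟨h4, h5⟩
      · have h4' : σ.toEquiv u = a := h4
        have h5' : σ.toEquiv v = b := h5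
        rwa [h4', h5'] at h2
      · have h4' : σ.toEquiv u = b := h4
        have h5' : σ.toEquiv v = a := h5
        rw [h4', h5'] at h2
        -- h2 : U.mulVec (pairState b a) = δ • pairState b a
        rw [pairState_neg a b, Matrix.mulVec_neg, smul_neg] at h2
        exact neg_injective h2
    have h6 : γ • pairState c d = δ • pairState a b := by rw [← hU, h3]
    have h7 : pairState c d = (γ⁻¹ * δ) • pairState a b := by
      rw [mul_smul, ← h6, smul_smul, inv_mul_cancel₀ hγ0, one_smul]
    have hμ : (γ⁻¹ * δ) = 1 ∨ (γ⁻¹ * δ) = -1 := by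
      rcases hδ with rfl | rfl
      · left; rw [inv_mul_cancel₀ hγ0]
      · right; rw [mul_neg, inv_mul_cancel₀ hγ0]
    exact hne ((pairState_sym2 hcd.ne hab.ne hμ h7).symm)
  -- build the involution on edges
  have card_odd : Odd (Fintype.card {e : Sym2 V // e ∈ G.edgeFinset}) := by
    rwa [Fintype.card_coe]
  choose next hnext_mem hnext_rel using rel_exists
  set f : {e : Sym2 V // e ∈ G.edgeFinset} → {e : Sym2 V // e ∈ G.edgeFinset} :=
    fun e => ⟨next e.1 (SimpleGraph.mem_edgeFinset.mp e.2),
      SimpleGraph.mem_edgeFinset.mpr (hnext_mem e.1 (SimpleGraph.mem_edgeFinset.mp e.2))⟩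
    with hf
  have hinv : ∀ e, f (f e) = e := by
    intro e
    apply Subtype.ext
    exact rel_unique (f e).1 _ _ (hnext_rel (f e).1 _)
      (rel_symm _ _ (hnext_rel e.1 (SimpleGraph.mem_edgeFinset.mp e.2)))
  obtain ⟨e, hfe⟩ := exists_fixed_of_odd card_odd f hinv
  have hrel := hnext_rel e.1 (SimpleGraph.mem_edgeFinset.mp e.2)
  have hval : (f e).1 = e.1 := congrArg Subtype.val hfe
  rw [hf] at hval
  simp only at hval
  rw [hval] at hrel
  exact rel_irrefl e.1 (SimpleGraph.mem_edgeFinset.mp e.2) hrel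
end

section
/- Let G be a finite simple graph on n vertices, Ḡ its complement, and let a ≠ b and c ≠ d be vertices. For every time t, there is perfect pair state transfer between e_a − e_b and e_c − e_d at time t in G if and only if there is perfect pair state transfer between e_a − e_b and e_c − e_d at time t in Ḡ. -/
open Matrix

variable {V : Type*}

set_option maxHeartbeats 1000000

section lemmas
variable [Fintype V] [DecidableEq V]

lemma mulVec_exp_eig (M : Matrix V V ℂ) (v : V → ℂ) (μ : ℂ)
    (h : M.mulVec v = μ • v) :
    (NormedSpace.exp M).mulVec v = Complex.exp μ • v := by
  letI : SeminormedRing (Matrix V V ℂ) := Matrix.linftyOpSemiNormedRing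
  letI : NormedRing (Matrix V V ℂ) := Matrix.linftyOpNormedRing
  letI : NormedAlgebra ℂ (Matrix V V ℂ) := Matrix.linftyOpNormedAlgebra
  have hpow : ∀ n : ℕ, (M ^ n).mulVec v = μ ^ n • v := by
    intro n
    induction n with
    | zero => simp
    | succ n ih =>
      rw [pow_succ, ← mulVec_mulVec, h, mulVec_smul, ih, smul_smul, ← pow_succ']
  let f0 : Matrix V V ℂ →ₗ[ℂ] (V → ℂ) :=
    { toFun := fun N => N.mulVec v
      map_add' := fun A B => Matrix.add_mulVec A B v
      map_smul' := fun c A => Matrix.smul_mulVec c A v }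
  let f : Matrix V V ℂ →L[ℂ] (V → ℂ) := LinearMap.toContinuousLinearMap f0
  have hf : ∀ N : Matrix V V ℂ, N.mulVec v = f N := fun _ => rfl
  have hsum : Summable fun n : ℕ => ((n.factorial : ℂ)⁻¹) * μ ^ n := by
    simpa [smul_eq_mul] using NormedSpace.expSeries_summable' (𝕂 := ℂ) μ
  rw [hf, NormedSpace.exp_eq_tsum ℂ,
    f.map_tsum (NormedSpace.expSeries_summable' (𝕂 := ℂ) M)]
  have key : ∀ n : ℕ, f (((n.factorial : ℂ)⁻¹) • M ^ n) = (((n.factorial : ℂ)⁻¹) * μ ^ n) • v := by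
    intro n
    rw [f.map_smul, ← hf, hpow, smul_smul]
  simp_rw [key]
  rw [Summable.tsum_smul_const hsum, Complex.exp_eq_exp_ℂ, NormedSpace.exp_eq_tsum ℂ]
  simp [smul_eq_mul]

lemma lap_compl (G : SimpleGraph V) [DecidableRel G.Adj] :
    Gᶜ.lapMatrix ℂ = (Fintype.card V : ℂ) • (1 : Matrix V V ℂ) - (Matrix.of fun _ _ => (1:ℂ)) - G.lapMatrix ℂ := by
  ext i j
  simp only [SimpleGraph.lapMatrix, SimpleGraph.degMatrix, SimpleGraph.adjMatrix,
    Matrix.sub_apply, Matrix.diagonal_apply, Matrix.of_apply, Matrix.smul_apply,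
    Matrix.one_apply, smul_eq_mul, mul_ite, mul_one, mul_zero, SimpleGraph.compl_adj]
  by_cases hij : i = j
  · subst hij
    have h1 : (1:ℕ) + G.degree i ≤ Fintype.card V := by
      have := G.degree_lt_card_verts i; omega
    simp only [if_pos rfl, SimpleGraph.degree_compl, SimpleGraph.irrefl, ne_eq,
      not_true_eq_false, false_and, if_false, if_neg, sub_zero]
    rw [Nat.sub_sub, Nat.cast_sub h1]
    push_cast
    ring
  · have hji : ¬ j = i := fun h => hij h.symm
    simp only [if_neg hij, ne_eq, hij, not_false_eq_true, true_and]
    by_cases hadj : G.Adj i j <;> simp [hadj]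

lemma lap_real (G : SimpleGraph V) [DecidableRel G.Adj] (i j : V) :
    (starRingEnd ℂ) (G.lapMatrix ℂ i j) = G.lapMatrix ℂ i j := by
  simp only [SimpleGraph.lapMatrix, SimpleGraph.degMatrix, SimpleGraph.adjMatrix,
    Matrix.sub_apply, Matrix.diagonal_apply, Matrix.of_apply]
  split_ifs <;> simp

lemma exp_map_conj (A : Matrix V V ℂ) :
    (NormedSpace.exp A).map (starRingEnd ℂ) = NormedSpace.exp (A.map (starRingEnd ℂ)) := by
  have hmc : ∀ M : Matrix V V ℂ, M.map (starRingEnd ℂ) = (Mᵀ)ᴴ := by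
    intro M; ext i j; simp [Matrix.conjTranspose_apply]
  rw [hmc, hmc, ← Matrix.exp_transpose, ← Matrix.exp_conjTranspose]

lemma pairState_real (a b j : V) : (starRingEnd ℂ) (pairState a b j) = pairState a b j := by
  simp only [pairState, Pi.sub_apply, Pi.single_apply]
  split_ifs <;> simp

lemma map_conj_mulVec (M : Matrix V V ℂ) (a b : V) :
    (M.map (starRingEnd ℂ)).mulVec (pairState a b)
      = fun i => (starRingEnd ℂ) ((M.mulVec (pairState a b)) i) := by
  funext i
  simp only [Matrix.mulVec, dotProduct, Matrix.map_apply]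
  rw [map_sum]
  exact Finset.sum_congr rfl fun k _ => by rw [_root_.map_mul, pairState_real]

lemma K_mulVec_pairState (c d : V) :
    ((Matrix.of fun _ _ => (1:ℂ)) : Matrix V V ℂ).mulVec (pairState c d) = 0 := by
  funext i
  simp [Matrix.mulVec, dotProduct, pairState, Finset.sum_sub_distrib]

lemma lap_eq_of_eq {G H : SimpleGraph V} [DecidableRel G.Adj] [DecidableRel H.Adj]
    (h : G = H) : G.lapMatrix ℂ = H.lapMatrix ℂ := by
  subst h; congr!

lemma aux_dir (G : SimpleGraph V) [DecidableRel G.Adj] (a b c d : V) (t : ℝ) :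
    PerfectPairStateTransfer G t a b c d → PerfectPairStateTransfer Gᶜ t a b c d := by
  rintro ⟨γ, hγ, h⟩
  set n : ℂ := (Fintype.card V : ℂ) with hn
  set L := G.lapMatrix ℂ with hL
  set K : Matrix V V ℂ := Matrix.of fun _ _ => (1:ℂ) with hK
  set A : Matrix V V ℂ := (Complex.I * (t:ℂ)) • L with hA
  set C : Matrix V V ℂ := (Complex.I * t * n) • (1 : Matrix V V ℂ) + (-(Complex.I * t)) • K with hC
  have hLK : L * K = 0 := by
    ext i j
    have := congrFun (G.lapMatrix_mulVec_const_eq_zero (R := ℂ)) i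
    simpa [Matrix.mul_apply, Matrix.mulVec, dotProduct, hK, hL] using this
  have hKL : K * L = 0 := by
    ext i j
    have := congrFun (G.lapMatrix_mulVec_const_eq_zero (R := ℂ)) j
    have hsym := G.isSymm_lapMatrix (R := ℂ)
    simp only [Matrix.mul_apply, hK, Matrix.of_apply, one_mul, Matrix.zero_apply]
    calc ∑ k, L k j = ∑ k, L j k := by
            refine Finset.sum_congr rfl fun k _ => ?_
            exact hsym.apply j k
      _ = 0 := by simpa [Matrix.mulVec, dotProduct] using this
  have hcommKL : Commute K L := by rw [Commute, SemiconjBy, hKL, hLK]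
  have hcomm : Commute C (-A) := by
    apply Commute.add_left
    · exact ((Commute.one_left (-A)).smul_left _)
    · exact ((hcommKL.smul_right _).neg_right.smul_left _)
  have hB : (Complex.I * (t:ℂ)) • Gᶜ.lapMatrix ℂ = C + (-A) := by
    rw [lap_compl G, hC, hA, hn, hK, hL]
    rw [smul_sub, smul_sub, smul_smul]
    module
  have hAconj : A.map (starRingEnd ℂ) = -A := by
    ext i j
    show (starRingEnd ℂ) (((Complex.I * (t:ℂ)) • L) i j) = (-((Complex.I * (t:ℂ)) • L)) i j
    simp only [Matrix.smul_apply, Matrix.neg_apply, smul_eq_mul, _root_.map_mul,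
      Complex.conj_I, Complex.conj_ofReal, hL, lap_real]
    ring
  -- exp(-A) applied to pairState a b
  have hexpA : (NormedSpace.exp (-A)).mulVec (pairState a b)
      = (starRingEnd ℂ) γ • pairState c d := by
    rw [← hAconj, ← exp_map_conj, map_conj_mulVec]
    have hh : (NormedSpace.exp A).mulVec (pairState a b) = γ • pairState c d := h
    funext i
    rw [hh]
    simp only [Pi.smul_apply, smul_eq_mul, _root_.map_mul, pairState_real]
  have hCeig : C.mulVec (pairState c d) = (Complex.I * t * n) • pairState c d := by
    rw [hC, Matrix.add_mulVec, Matrix.smul_mulVec, Matrix.smul_mulVec,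
      Matrix.one_mulVec, K_mulVec_pairState]
    simp
  refine ⟨Complex.exp (Complex.I * t * n) * (starRingEnd ℂ) γ, ?_, ?_⟩
  · rw [norm_mul, Complex.norm_exp, Complex.norm_conj, hγ]
    have : (Complex.I * t * n).re = 0 := by
      simp [hn, Complex.mul_re, Complex.mul_im]
    rw [this, Real.exp_zero, one_mul]
  · show (NormedSpace.exp ((Complex.I * (t:ℂ)) • Gᶜ.lapMatrix ℂ)).mulVec (pairState a b) = _
    rw [hB, Matrix.exp_add_of_commute C (-A) hcomm, ← Matrix.mulVec_mulVec, hexpA,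
      Matrix.mulVec_smul, mulVec_exp_eig C (pairState c d) (Complex.I * t * n) hCeig]
    rw [smul_smul, mul_comm]

end lemmas

/-- Perfect pair state transfer in `G` is equivalent to perfect pair state transfer
in the complement of `G`, at every time. -/
theorem pst_compl [Fintype V] [DecidableEq V] (G : SimpleGraph V) [DecidableRel G.Adj]
    (a b c d : V) (hab : a ≠ b) (hcd : c ≠ d) (t : ℝ) :
    PerfectPairStateTransfer G t a b c d ↔ PerfectPairStateTransfer Gᶜ t a b c d := by
  constructor
  · exact aux_dir G a b c d t
  · intro h
    have h2 := aux_dir Gᶜ a b c d t h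
    unfold PerfectPairStateTransfer transitionMatrix at h2 ⊢
    rwa [lap_eq_of_eq (compl_compl G)] at h2
end
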